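/- Let Π be a finite set, f : Π → ℝ^m, and z* ∈ ℝ^m with z*_i < f_i(π) for all π ∈ Π and i. For every Pareto optimal π* ∈ Π there exists a preference λ ∈ ℝ^m with λ_i > 0 and ∑_i λ_i = 1 such that π* minimizes the Chebyshev scalarized cost max_i λ_i (f_i(π) − z*_i) over Π. In particular, one may take λ_i proportional to 1/(f_i(π*) − z*_i). -/
import Mathlib


/-- Strict Pareto dominance. -/
def Dominates {m : ℕ} (y z : Fin m → ℝ) : Prop :=
  (∀ i, y i ≤ z i) ∧ ∃ i, y i < z i

/-- Chebyshev scalarization completeness: every Pareto-optimal solution minimizes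
some Chebyshev scalarized cost with strictly positive weights summing to one;
in particular one may take `λ i` proportional to `1 / (f πstar i - z i)`. -/
theorem chebyshev_completeness {P : Type*} [Fintype P]
    {m : ℕ} (hm : 0 < m) (f : P → Fin m → ℝ) (z : Fin m → ℝ)
    (hz : ∀ (π : P) (i : Fin m), z i < f π i) (πstar : P)
    (hpareto : ∀ π : P, ¬ Dominates (f π) (f πstar)) :
    ∃ lam : Fin m → ℝ, (∀ i, 0 < lam i) ∧ (∑ i, lam i = 1) ∧
      (∀ π : P, (⨆ i, lam i * (f πstar i - z i)) ≤ ⨆ i, lam i * (f π i - z i)) ∧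
      (∃ t : ℝ, 0 < t ∧ ∀ i, lam i = t / (f πstar i - z i)) := by
  haveI : Nonempty (Fin m) := ⟨⟨0, hm⟩⟩
  set g : Fin m → ℝ := fun i => f πstar i - z i with hg
  have hgpos : ∀ i, 0 < g i := fun i => sub_pos.mpr (hz πstar i)
  have hSpos : 0 < ∑ i, 1 / g i :=
    Finset.sum_pos (fun i _ => div_pos one_pos (hgpos i)) Finset.univ_nonempty
  set t : ℝ := (∑ i, 1 / g i)⁻¹ with ht
  have htpos : 0 < t := inv_pos.mpr hSpos
  refine ⟨fun i => t / g i, fun i => div_pos htpos (hgpos i), ?_, ?_, ⟨t, htpos, fun i => rfl⟩⟩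
  · have : ∑ i, t / g i = t * ∑ i, 1 / g i := by
      rw [Finset.mul_sum]; exact Finset.sum_congr rfl fun i _ => by ring
    rw [this, ht, inv_mul_cancel₀ (ne_of_gt hSpos)]
  · intro π
    have hconst : ∀ i, t / g i * (f πstar i - z i) = t := fun i =>
      div_mul_cancel₀ t (ne_of_gt (hgpos i))
    have h1 : (⨆ i, t / g i * (f πstar i - z i)) = t := by
      simp only [hconst]; exact ciSup_const
    rw [h1]
    -- find an index where f πstar i ≤ f π i
    have hex : ∃ i, f πstar i ≤ f π i := by
      by_contra h
      push_neg at h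
      exact hpareto π ⟨fun i => le_of_lt (h i), ⟨⟨0, hm⟩, h _⟩⟩
    obtain ⟨i, hi⟩ := hex
    have hle : t ≤ t / g i * (f π i - z i) := by
      calc t = t / g i * (f πstar i - z i) := (hconst i).symm
        _ ≤ t / g i * (f π i - z i) := by
            apply mul_le_mul_of_nonneg_left (by linarith) (le_of_lt (div_pos htpos (hgpos i)))
    exact hle.trans (le_ciSup (f := fun j => t / g j * (f π j - z j)) (Set.Finite.bddAbove (Set.finite_range _)) i)
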